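/- (Lemma III.5) Let Assumption 2 hold and let (x^k), (y^k), (p^k) be BADMM iterates. Then there exist σ₀ > 0 and σ₁ > 0 such that, defining L̃(x, y, p, x̃) := L_α(x, y, p) + (σ₀/2)‖x − x̃‖², for every k ≥ 1: σ₁(‖x^{k+1} − x^k‖² + ‖y^{k+1} − y^k‖²) ≤ L̃(x^k, y^k, p^k, x^{k−1}) − L̃(x^{k+1}, y^{k+1}, p^{k+1}, x^k). -/

import Mathlib

open scoped InnerProductSpace

/-- The augmented Lagrangian `L_α(x,y,p)`. -/
noncomputable def augL {n₁ n₂ m : ℕ}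
    (A : EuclideanSpace ℝ (Fin n₁) →L[ℝ] EuclideanSpace ℝ (Fin m))
    (B : EuclideanSpace ℝ (Fin n₂) →L[ℝ] EuclideanSpace ℝ (Fin m))
    (f : EuclideanSpace ℝ (Fin n₁) → ℝ) (g : EuclideanSpace ℝ (Fin n₂) → ℝ)
    (α : ℝ) (x : EuclideanSpace ℝ (Fin n₁)) (y : EuclideanSpace ℝ (Fin n₂))
    (p : EuclideanSpace ℝ (Fin m)) : ℝ :=
  f x + g y + ⟪p, A x - B y⟫_ℝ + α / 2 * ‖A x - B y‖ ^ 2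

/-- Bregman distance of a differentiable function `h` with gradient `h'`. -/
noncomputable def bregman {n : ℕ} (h : EuclideanSpace ℝ (Fin n) → ℝ)
    (h' : EuclideanSpace ℝ (Fin n) → EuclideanSpace ℝ (Fin n))
    (u v : EuclideanSpace ℝ (Fin n)) : ℝ :=
  h u - h v - ⟪h' v, u - v⟫_ℝ

section AuxLemmas

set_option linter.unusedSectionVars false

open Set Filter Topology InnerProductSpace ContinuousLinearMap

variable {E F : Type*} [NormedAddCommGroup E] [InnerProductSpace ℝ E] [CompleteSpace E]
  [NormedAddCommGroup F] [InnerProductSpace ℝ F] [CompleteSpace F]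

/-- Gradient inequality for convex differentiable functions. -/
lemma convex_grad_ineq {h : E → ℝ} {gv : E} {v : E}
    (hc : ConvexOn ℝ Set.univ h) (hd : HasGradientAt h gv v) (u : E) :
    h v + ⟪gv, u - v⟫_ℝ ≤ h u := by
  set d := u - v with hdd
  have hline : HasDerivAt (fun t : ℝ => v + t • d) d 0 := by
    simpa using ((hasDerivAt_id (0:ℝ)).smul_const d).const_add v
  have hF : HasFDerivAt h (toDual ℝ E gv) v := hd
  have hF' : HasFDerivAt h (toDual ℝ E gv) ((fun t : ℝ => v + t • d) 0) := by
    simpa using hF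
  have hq : HasDerivAt (fun t : ℝ => h (v + t • d)) ⟪gv, d⟫_ℝ 0 := by
    have h5 := hF'.comp_hasDerivAt (0:ℝ) hline
    simp at h5
    exact h5
  have hW : HasDerivWithinAt (fun t : ℝ => h (v + t • d)) ⟪gv, d⟫_ℝ (Ioi 0) 0 :=
    hq.hasDerivWithinAt
  rw [hasDerivWithinAt_iff_tendsto_slope] at hW
  have hsub : (Ioi (0:ℝ)) \ {0} = Ioi 0 :=
    Set.diff_singleton_eq_self (by simp)
  rw [hsub] at hW
  have key : ⟪gv, d⟫_ℝ ≤ h u - h v := by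
    refine le_of_tendsto hW ?_
    filter_upwards [Ioc_mem_nhdsGT_of_mem (Set.left_mem_Ico.mpr one_pos)] with t ht
    have ht0 : 0 < t := ht.1
    have ht1 : t ≤ 1 := ht.2
    have hcomb : (1-t) • v + t • u = v + t • d := by rw [hdd]; module
    have hcv := hc.2 (Set.mem_univ v) (Set.mem_univ u) (show (0:ℝ) ≤ 1 - t by linarith) ht0.le (by ring)
    rw [hcomb] at hcv
    simp only [smul_eq_mul] at hcv
    have hslope : slope (fun t : ℝ => h (v + t • d)) 0 t
        = (h (v + t • d) - h v) / t := by
      simp [slope_def_field]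
    rw [hslope]
    rw [div_le_iff₀ ht0]
    nlinarith [hcv]
  linarith

lemma gradAdd {f h : E → ℝ} {gf gh : E} {z : E}
    (hf : HasGradientAt f gf z) (hh : HasGradientAt h gh z) :
    HasGradientAt (fun w => f w + h w) (gf + gh) z := by
  rw [hasGradientAt_iff_hasFDerivAt] at *
  rw [map_add]
  exact hf.add hh

lemma gradSub {f h : E → ℝ} {gf gh : E} {z : E}
    (hf : HasGradientAt f gf z) (hh : HasGradientAt h gh z) :
    HasGradientAt (fun w => f w - h w) (gf - gh) z := by
  rw [hasGradientAt_iff_hasFDerivAt] at *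
  rw [map_sub]
  exact hf.sub hh

lemma gradAddConst {f : E → ℝ} {gf : E} {z : E} (c : ℝ)
    (hf : HasGradientAt f gf z) :
    HasGradientAt (fun w => f w + c) gf z := by
  rw [hasGradientAt_iff_hasFDerivAt] at *
  exact hf.add_const c

lemma gradSubConst {f : E → ℝ} {gf : E} {z : E} (c : ℝ)
    (hf : HasGradientAt f gf z) :
    HasGradientAt (fun w => f w - c) gf z := by
  rw [hasGradientAt_iff_hasFDerivAt] at *
  exact hf.sub_const c

lemma gradInnerAffine (A : E →L[ℝ] F) (p : F) (w : F) (z : E) :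
    HasGradientAt (fun x => ⟪p, A x - w⟫_ℝ) (ContinuousLinearMap.adjoint A p) z := by
  have hfun : (fun x : E => ⟪p, A x - w⟫_ℝ)
      = fun x => (toDual ℝ E (ContinuousLinearMap.adjoint A p)) x - ⟪p, w⟫_ℝ := by
    funext x
    simp [inner_sub_right, ContinuousLinearMap.adjoint_inner_left]
  rw [hasGradientAt_iff_hasFDerivAt, hfun]
  exact ((toDual ℝ E (ContinuousLinearMap.adjoint A p))).hasFDerivAt.sub_const _

lemma gradInnerSub (c v z : E) :
    HasGradientAt (fun w : E => ⟪c, w - v⟫_ℝ) c z := by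
  have := gradInnerAffine (ContinuousLinearMap.id ℝ E) c v z
  simpa [ContinuousLinearMap.adjoint_id] using this

lemma gradNormSqAffine (A : E →L[ℝ] F) (w : F) (c : ℝ) (z : E) :
    HasGradientAt (fun x => c / 2 * ‖A x - w‖ ^ 2)
      (c • ContinuousLinearMap.adjoint A (A z - w)) z := by
  have hT : HasFDerivAt (fun x : E => A x - w) (A : E →L[ℝ] F) z :=
    A.hasFDerivAt.sub_const w
  have h1 := (hT.inner ℝ hT).const_mul (c / 2)
  have hfun : (fun x : E => c / 2 * ‖A x - w‖ ^ 2)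
      = fun x => c / 2 * ⟪A x - w, A x - w⟫_ℝ := by
    funext x; rw [real_inner_self_eq_norm_sq]
  rw [hasGradientAt_iff_hasFDerivAt, hfun]
  refine h1.congr_fderiv ?_
  ext v
  simp [fderivInnerCLM_apply, ContinuousLinearMap.adjoint_inner_left,
    real_inner_smul_left, toDual_apply_apply]
  simp only [inner_sub_left, inner_sub_right]
  rw [real_inner_comm (A v) (A z), real_inner_comm (A v) w]
  ring

lemma gradHalfNormSq (c : ℝ) (z : E) :
    HasGradientAt (fun x : E => c / 2 * ‖x‖ ^ 2) (c • z) z := by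
  have := gradNormSqAffine (ContinuousLinearMap.id ℝ E) 0 c z
  simpa [ContinuousLinearMap.adjoint_id] using this

/-- Minimizers of strongly convex functions. -/
lemma strong_min {h : E → ℝ} {μ : ℝ}
    (hc : ConvexOn ℝ Set.univ (fun z => h z - μ / 2 * ‖z‖ ^ 2))
    {xs : E} (hmin : ∀ z, h xs ≤ h z) (u : E) :
    h xs + μ / 2 * ‖u - xs‖ ^ 2 ≤ h u := by
  set g : E → ℝ := fun z => h z - μ / 2 * ‖z‖ ^ 2 with hgdef
  set d := u - xs with hd
  have hgval : ∀ w : E, g w = h w - μ / 2 * ‖w‖ ^ 2 := fun _ => rfl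
  clear_value g d
  have hu : u = xs + d := by rw [hd]; abel
  have key : ∀ t : ℝ, 0 < t → t ≤ 1 →
      g xs - g u ≤ μ * ⟪xs, d⟫_ℝ + μ * t / 2 * ‖d‖ ^ 2 := by
    intro t ht0 ht1
    have hcomb : (1 - t) • xs + t • u = xs + t • d := by rw [hd]; module
    have hcv := hc.2 (Set.mem_univ xs) (Set.mem_univ u)
      (show (0:ℝ) ≤ 1 - t by linarith) ht0.le (by ring)
    rw [hcomb] at hcv
    simp only [smul_eq_mul] at hcv
    have hmin' := hmin (xs + t • d)
    have hexp : ‖xs + t • d‖ ^ 2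
        = ‖xs‖ ^ 2 + 2 * (t * ⟪xs, d⟫_ℝ) + t ^ 2 * ‖d‖ ^ 2 := by
      rw [norm_add_sq_real, real_inner_smul_right, norm_smul, Real.norm_eq_abs,
        mul_pow, sq_abs]
    have hgw := hgval (xs + t • d)
    have hgxs := hgval xs
    have hgu := hgval u
    have hexp2 : μ / 2 * ‖xs + t • d‖ ^ 2
        = μ / 2 * ‖xs‖ ^ 2 + μ * (t * ⟪xs, d⟫_ℝ) + μ / 2 * (t ^ 2 * ‖d‖ ^ 2) := by
      rw [hexp]; ring
    have hlin : t * (g xs - g u) ≤ t * (μ * ⟪xs, d⟫_ℝ + μ * t / 2 * ‖d‖ ^ 2) := by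
      have expand : t * (μ * ⟪xs, d⟫_ℝ + μ * t / 2 * ‖d‖ ^ 2)
          = μ * (t * ⟪xs, d⟫_ℝ) + μ / 2 * (t ^ 2 * ‖d‖ ^ 2) := by ring
      rw [expand]
      linarith [hmin', hcv, hgw, hgxs, hexp2]
    exact le_of_mul_le_mul_left hlin ht0
  have key2 : g xs - g u ≤ μ * ⟪xs, d⟫_ℝ := by
    refine le_of_forall_sub_le fun ε hε => ?_
    set t : ℝ := min 1 (ε / (|μ| / 2 * ‖d‖ ^ 2 + 1)) with htdef
    have ht0 : 0 < t := lt_min one_pos (by positivity)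
    have ht1 : t ≤ 1 := min_le_left _ _
    have hbound : μ * t / 2 * ‖d‖ ^ 2 ≤ ε := by
      have h1 : μ * t / 2 * ‖d‖ ^ 2 ≤ |μ| * t / 2 * ‖d‖ ^ 2 := by
        nlinarith [mul_nonneg (mul_nonneg (sub_nonneg.mpr (le_abs_self μ)) ht0.le)
          (sq_nonneg ‖d‖)]
      have h2 : t ≤ ε / (|μ| / 2 * ‖d‖ ^ 2 + 1) := min_le_right _ _
      have h3 : |μ| * t / 2 * ‖d‖ ^ 2 ≤ (ε / (|μ| / 2 * ‖d‖ ^ 2 + 1)) * (|μ| / 2 * ‖d‖ ^ 2) := by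
        have hprod := mul_nonneg (sub_nonneg.mpr h2)
          (show (0:ℝ) ≤ |μ| / 2 * ‖d‖ ^ 2 by positivity)
        nlinarith [hprod]
      have h4 : (ε / (|μ| / 2 * ‖d‖ ^ 2 + 1)) * (|μ| / 2 * ‖d‖ ^ 2) ≤ ε := by
        rw [div_mul_eq_mul_div, div_le_iff₀ (by positivity)]
        nlinarith
      linarith
    have hk := key t ht0 ht1
    clear_value t
    linarith
  have hnu : ‖u‖ ^ 2 = ‖xs‖ ^ 2 + 2 * ⟪xs, d⟫_ℝ + ‖d‖ ^ 2 := by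
    rw [hu, norm_add_sq_real]
  have hgxs := hgval xs
  have hgu := hgval u
  have hnu2 : μ / 2 * ‖u‖ ^ 2
      = μ / 2 * ‖xs‖ ^ 2 + μ * ⟪xs, d⟫_ℝ + μ / 2 * ‖d‖ ^ 2 := by rw [hnu]; ring
  have hgoal : h xs + μ / 2 * ‖d‖ ^ 2 ≤ h u := by
    linarith [key2, hgxs, hgu, hnu2]
  exact hgoal

/-- Bregman distance of a `μ`-strongly-convex differentiable function. -/
lemma bregman_strong_aux {ψ : E → ℝ} {ψ' : E → E} {μ : ℝ}
    (hconv : ConvexOn ℝ Set.univ (fun z => ψ z - μ / 2 * ‖z‖ ^ 2))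
    (hdiff : ∀ w, HasGradientAt ψ (ψ' w) w) (u v : E) :
    μ / 2 * ‖u - v‖ ^ 2 ≤ ψ u - ψ v - ⟪ψ' v, u - v⟫_ℝ := by
  have hg : HasGradientAt (fun z : E => ψ z - μ / 2 * ‖z‖ ^ 2) (ψ' v - μ • v) v :=
    gradSub (hdiff v) (gradHalfNormSq μ v)
  have := convex_grad_ineq hconv hg u
  have hexp : ‖u‖ ^ 2 = ‖v‖ ^ 2 + 2 * ⟪v, u - v⟫_ℝ + ‖u - v‖ ^ 2 := by
    have hu : u = v + (u - v) := by abel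
    calc ‖u‖ ^ 2 = ‖v + (u - v)‖ ^ 2 := by rw [← hu]
    _ = _ := norm_add_sq_real _ _
  rw [inner_sub_left, real_inner_smul_left] at this
  have hexp2 : μ / 2 * ‖u‖ ^ 2
      = μ / 2 * ‖v‖ ^ 2 + μ * ⟪v, u - v⟫_ℝ + μ / 2 * ‖u - v‖ ^ 2 := by rw [hexp]; ring
  linarith

end AuxLemmas

section MainProof

open ContinuousLinearMap InnerProductSpace

set_option maxHeartbeats 1000000 in
theorem badmm_lemma_III_5
{n₁ n₂ m : ℕ} (hn₁ : 0 < n₁) (hn₂ : 0 < n₂) (hm : 0 < m)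
    (A : EuclideanSpace ℝ (Fin n₁) →L[ℝ] EuclideanSpace ℝ (Fin m))
    (B : EuclideanSpace ℝ (Fin n₂) →L[ℝ] EuclideanSpace ℝ (Fin m))
    (f : EuclideanSpace ℝ (Fin n₁) → ℝ) (g : EuclideanSpace ℝ (Fin n₂) → ℝ)
    (f' : EuclideanSpace ℝ (Fin n₁) → EuclideanSpace ℝ (Fin n₁))
    (hfC1 : ContDiff ℝ 1 f) (hfgrad : ∀ u, HasGradientAt f (f' u) u)
    (ℓf : ℝ) (hℓf : 0 ≤ ℓf) (hf' : ∀ u v, ‖f' u - f' v‖ ≤ ℓf * ‖u - v‖)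
    (hg : LowerSemicontinuous g)
    (φ : EuclideanSpace ℝ (Fin n₁) → ℝ)
    (φ' : EuclideanSpace ℝ (Fin n₁) → EuclideanSpace ℝ (Fin n₁))
    (hφconv : ConvexOn ℝ Set.univ φ) (hφdiff : ∀ u, HasGradientAt φ (φ' u) u)
    (ℓφ : ℝ) (hℓφ : 0 ≤ ℓφ) (hφ' : ∀ u v, ‖φ' u - φ' v‖ ≤ ℓφ * ‖u - v‖)
    (ψ : EuclideanSpace ℝ (Fin n₂) → ℝ)
    (ψ' : EuclideanSpace ℝ (Fin n₂) → EuclideanSpace ℝ (Fin n₂))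
    (hψconv : ConvexOn ℝ Set.univ ψ) (hψdiff : ∀ u, HasGradientAt ψ (ψ' u) u)
    (ℓψ : ℝ) (hℓψ : 0 ≤ ℓψ) (hψ' : ∀ u v, ‖ψ' u - ψ' v‖ ≤ ℓψ * ‖u - v‖)
    (α μ₀ : ℝ) (hα : 0 < α) (hμ₀ : 0 < μ₀)
    (hA : ∀ q : EuclideanSpace ℝ (Fin m),
      μ₀ * ‖q‖ ^ 2 ≤ ‖ContinuousLinearMap.adjoint A q‖ ^ 2)
    (μ₁ : ℝ) (hμ₁ : 0 < μ₁)
    (hsc : (∀ (y : EuclideanSpace ℝ (Fin n₂)) (p : EuclideanSpace ℝ (Fin m)),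
          ConvexOn ℝ Set.univ (fun x => augL A B f g α x y p - μ₁ / 2 * ‖x‖ ^ 2)) ∨
        ConvexOn ℝ Set.univ (fun x => φ x - μ₁ / 2 * ‖x‖ ^ 2))
    (hαbig : α > 4 * ((ℓf + ℓφ) ^ 2 + ℓφ ^ 2) / (μ₁ * μ₀))
    (x : ℕ → EuclideanSpace ℝ (Fin n₁)) (y : ℕ → EuclideanSpace ℝ (Fin n₂))
    (p : ℕ → EuclideanSpace ℝ (Fin m))
    (hy : ∀ k, ∀ y' : EuclideanSpace ℝ (Fin n₂),
      augL A B f g α (x k) (y (k + 1)) (p k) + bregman ψ ψ' (y (k + 1)) (y k) ≤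
        augL A B f g α (x k) y' (p k) + bregman ψ ψ' y' (y k))
    (hx : ∀ k, ∀ x' : EuclideanSpace ℝ (Fin n₁),
      augL A B f g α (x (k + 1)) (y (k + 1)) (p k) + bregman φ φ' (x (k + 1)) (x k) ≤
        augL A B f g α x' (y (k + 1)) (p k) + bregman φ φ' x' (x k))
    (hp : ∀ k, p (k + 1) = p k + α • (A (x (k + 1)) - B (y (k + 1))))
    (μ₂ : ℝ) (hμ₂ : 0 < μ₂)
    (hψsc : ConvexOn ℝ Set.univ (fun z => ψ z - μ₂ / 2 * ‖z‖ ^ 2)) :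
    ∃ σ₀ > (0 : ℝ), ∃ σ₁ > (0 : ℝ), ∀ k : ℕ, 1 ≤ k →
      σ₁ * (‖x (k + 1) - x k‖ ^ 2 + ‖y (k + 1) - y k‖ ^ 2) ≤
        (augL A B f g α (x k) (y k) (p k) + σ₀ / 2 * ‖x k - x (k - 1)‖ ^ 2)
          - (augL A B f g α (x (k + 1)) (y (k + 1)) (p (k + 1))
              + σ₀ / 2 * ‖x (k + 1) - x k‖ ^ 2) := by
  -- Step 0: gradient of the x-subproblem objective
  have hgradF : ∀ k : ℕ,
      HasGradientAt
        (fun w => augL A B f g α w (y (k + 1)) (p k) + bregman φ φ' w (x k))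
        (f' (x (k + 1)) + ContinuousLinearMap.adjoint A (p k)
          + α • ContinuousLinearMap.adjoint A (A (x (k + 1)) - B (y (k + 1)))
          + (φ' (x (k + 1)) - φ' (x k))) (x (k + 1)) := by
    intro k
    have h1 : HasGradientAt (fun w => f w + g (y (k + 1)) + ⟪p k, A w - B (y (k + 1))⟫_ℝ
          + α / 2 * ‖A w - B (y (k + 1))‖ ^ 2)
        (f' (x (k + 1)) + ContinuousLinearMap.adjoint A (p k)
          + α • ContinuousLinearMap.adjoint A (A (x (k + 1)) - B (y (k + 1)))) (x (k + 1)) :=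
      gradAdd (gradAdd (gradAddConst _ (hfgrad _)) (gradInnerAffine A _ _ _))
        (gradNormSqAffine A _ α _)
    have h2 : HasGradientAt (fun w => φ w - φ (x k) - ⟪φ' (x k), w - x k⟫_ℝ)
        (φ' (x (k + 1)) - φ' (x k)) (x (k + 1)) :=
      gradSub (gradSubConst _ (hφdiff _)) (gradInnerSub _ _ _)
    have h3 := gradAdd h1 h2
    simp only [augL, bregman]
    exact h3
  -- Step 1: stationarity of the x-update
  have hstat2 : ∀ k : ℕ, ContinuousLinearMap.adjoint A (p (k + 1))
      = φ' (x k) - f' (x (k + 1)) - φ' (x (k + 1)) := by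
    intro k
    have hmin : IsLocalMin
        (fun w => augL A B f g α w (y (k + 1)) (p k) + bregman φ φ' w (x k)) (x (k + 1)) :=
      Filter.Eventually.of_forall (hx k)
    have hz := hmin.hasFDerivAt_eq_zero (hasGradientAt_iff_hasFDerivAt.mp (hgradF k))
    have hzero : f' (x (k + 1)) + ContinuousLinearMap.adjoint A (p k)
        + α • ContinuousLinearMap.adjoint A (A (x (k + 1)) - B (y (k + 1)))
        + (φ' (x (k + 1)) - φ' (x k)) = 0 := by
      have h4 := congrArg (InnerProductSpace.toDual ℝ (EuclideanSpace ℝ (Fin n₁))).symm hz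
      simpa using h4
    have hadj : ContinuousLinearMap.adjoint A (p (k + 1))
        = ContinuousLinearMap.adjoint A (p k)
          + α • ContinuousLinearMap.adjoint A (A (x (k + 1)) - B (y (k + 1))) := by
      rw [hp k, map_add, map_smul]
    rw [hadj, ← sub_eq_zero]
    rw [show ContinuousLinearMap.adjoint A (p k)
          + α • ContinuousLinearMap.adjoint A (A (x (k + 1)) - B (y (k + 1)))
          - (φ' (x k) - f' (x (k + 1)) - φ' (x (k + 1)))
        = f' (x (k + 1)) + ContinuousLinearMap.adjoint A (p k)
          + α • ContinuousLinearMap.adjoint A (A (x (k + 1)) - B (y (k + 1)))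
          + (φ' (x (k + 1)) - φ' (x k)) from by abel]
    exact hzero
  -- Step 2: descent of the y-update
  have hI : ∀ k : ℕ, augL A B f g α (x k) (y (k + 1)) (p k)
      + μ₂ / 2 * ‖y (k + 1) - y k‖ ^ 2 ≤ augL A B f g α (x k) (y k) (p k) := by
    intro k
    have h1 := hy k (y k)
    have h2 : bregman ψ ψ' (y k) (y k) = 0 := by simp [bregman]
    have h3 : μ₂ / 2 * ‖y (k + 1) - y k‖ ^ 2 ≤ bregman ψ ψ' (y (k + 1)) (y k) :=
      bregman_strong_aux hψsc hψdiff _ _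
    linarith
  -- Step 3: descent of the x-update
  have hII : ∀ k : ℕ, augL A B f g α (x (k + 1)) (y (k + 1)) (p k)
      + μ₁ / 2 * ‖x (k + 1) - x k‖ ^ 2 ≤ augL A B f g α (x k) (y (k + 1)) (p k) := by
    intro k
    have hb0 : bregman φ φ' (x k) (x k) = 0 := by simp [bregman]
    have hbnn : 0 ≤ bregman φ φ' (x (k + 1)) (x k) := by
      have h5 := convex_grad_ineq hφconv (hφdiff (x k)) (x (k + 1))
      simp only [bregman]; linarith
    rcases hsc with hL | hφs
    · have haff : ConcaveOn ℝ Set.univ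
          (fun w : EuclideanSpace ℝ (Fin n₁) => φ (x k) + ⟪φ' (x k), w - x k⟫_ℝ) := by
        refine ⟨convex_univ, fun u _ v _ ta tb hta htb htab => le_of_eq ?_⟩
        simp only [smul_eq_mul, inner_sub_right, inner_add_right, real_inner_smul_right]
        linear_combination (φ (x k) - ⟪φ' (x k), x k⟫_ℝ) * htab
      have hbc : ConvexOn ℝ Set.univ
          (fun w : EuclideanSpace ℝ (Fin n₁) => bregman φ φ' w (x k)) := by
        have heq : (fun w : EuclideanSpace ℝ (Fin n₁) => bregman φ φ' w (x k))
            = fun w => φ w - (φ (x k) + ⟪φ' (x k), w - x k⟫_ℝ) := by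
          funext w; simp only [bregman]; ring
        rw [heq]
        exact hφconv.sub haff
      have hconv : ConvexOn ℝ Set.univ (fun w : EuclideanSpace ℝ (Fin n₁) =>
          (augL A B f g α w (y (k + 1)) (p k) + bregman φ φ' w (x k))
            - μ₁ / 2 * ‖w‖ ^ 2) := by
        have hsum := (hL (y (k + 1)) (p k)).add hbc
        have heq2 : (fun w : EuclideanSpace ℝ (Fin n₁) =>
              (augL A B f g α w (y (k + 1)) (p k) + bregman φ φ' w (x k))
                - μ₁ / 2 * ‖w‖ ^ 2)
            = fun w => (augL A B f g α w (y (k + 1)) (p k) - μ₁ / 2 * ‖w‖ ^ 2)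
                + bregman φ φ' w (x k) := by
          funext w; ring
        rw [heq2]
        exact hsum
      have hsm : (augL A B f g α (x (k + 1)) (y (k + 1)) (p k)
            + bregman φ φ' (x (k + 1)) (x k))
            + μ₁ / 2 * ‖x k - x (k + 1)‖ ^ 2
          ≤ augL A B f g α (x k) (y (k + 1)) (p k) + bregman φ φ' (x k) (x k) :=
        strong_min hconv (hx k) (x k)
      rw [norm_sub_rev (x k) (x (k + 1))] at hsm
      linarith
    · have h1 := hx k (x k)
      have h3 : μ₁ / 2 * ‖x (k + 1) - x k‖ ^ 2 ≤ bregman φ φ' (x (k + 1)) (x k) :=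
        bregman_strong_aux hφs hφdiff _ _
      linarith
  -- Step 4: dual ascent identity
  have hIII : ∀ k : ℕ, augL A B f g α (x (k + 1)) (y (k + 1)) (p (k + 1))
      = augL A B f g α (x (k + 1)) (y (k + 1)) (p k)
        + 1 / α * ‖p (k + 1) - p k‖ ^ 2 := by
    intro k
    have hr : p (k + 1) - p k = α • (A (x (k + 1)) - B (y (k + 1))) := by
      rw [hp k]; abel
    have hinner : ⟪p (k + 1), A (x (k + 1)) - B (y (k + 1))⟫_ℝ
        = ⟪p k, A (x (k + 1)) - B (y (k + 1))⟫_ℝ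
          + α * ‖A (x (k + 1)) - B (y (k + 1))‖ ^ 2 := by
      rw [hp k, inner_add_left, real_inner_smul_left, real_inner_self_eq_norm_sq]
    have hnp : ‖p (k + 1) - p k‖ ^ 2 = α ^ 2 * ‖A (x (k + 1)) - B (y (k + 1))‖ ^ 2 := by
      rw [hr, norm_smul, Real.norm_eq_abs, mul_pow, sq_abs]
    simp only [augL]
    rw [hinner, hnp]
    field_simp
    ring
  -- Step 5: dual bound
  have hIV : ∀ j : ℕ, μ₀ * ‖p (j + 1 + 1) - p (j + 1)‖ ^ 2
      ≤ 2 * (ℓf + ℓφ) ^ 2 * ‖x (j + 1 + 1) - x (j + 1)‖ ^ 2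
        + 2 * ℓφ ^ 2 * ‖x (j + 1) - x j‖ ^ 2 := by
    intro j
    have hv : ContinuousLinearMap.adjoint A (p (j + 1 + 1) - p (j + 1))
        = (f' (x (j + 1)) - f' (x (j + 1 + 1))) + (φ' (x (j + 1)) - φ' (x (j + 1 + 1)))
          + (φ' (x (j + 1)) - φ' (x j)) := by
      rw [map_sub, hstat2 (j + 1), hstat2 j]; abel
    have hnorm : ‖ContinuousLinearMap.adjoint A (p (j + 1 + 1) - p (j + 1))‖
        ≤ (ℓf + ℓφ) * ‖x (j + 1 + 1) - x (j + 1)‖ + ℓφ * ‖x (j + 1) - x j‖ := by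
      rw [hv]
      have n1 := hf' (x (j + 1)) (x (j + 1 + 1))
      have n2 := hφ' (x (j + 1)) (x (j + 1 + 1))
      have n3 := hφ' (x (j + 1)) (x j)
      have hs : ‖x (j + 1) - x (j + 1 + 1)‖ = ‖x (j + 1 + 1) - x (j + 1)‖ :=
        norm_sub_rev _ _
      rw [hs] at n1 n2
      have htri := norm_add₃_le (E := EuclideanSpace ℝ (Fin n₁))
        (a := f' (x (j + 1)) - f' (x (j + 1 + 1)))
        (b := φ' (x (j + 1)) - φ' (x (j + 1 + 1)))
        (c := φ' (x (j + 1)) - φ' (x j))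
      linarith
    have hA' := hA (p (j + 1 + 1) - p (j + 1))
    have h0 : (0:ℝ) ≤ (ℓf + ℓφ) * ‖x (j + 1 + 1) - x (j + 1)‖
        + ℓφ * ‖x (j + 1) - x j‖ := by positivity
    have hsq : ‖ContinuousLinearMap.adjoint A (p (j + 1 + 1) - p (j + 1))‖ ^ 2
        ≤ ((ℓf + ℓφ) * ‖x (j + 1 + 1) - x (j + 1)‖ + ℓφ * ‖x (j + 1) - x j‖) ^ 2 := by
      nlinarith [norm_nonneg (ContinuousLinearMap.adjoint A (p (j + 1 + 1) - p (j + 1))),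
        hnorm]
    nlinarith [hA', hsq,
      sq_nonneg ((ℓf + ℓφ) * ‖x (j + 1 + 1) - x (j + 1)‖ - ℓφ * ‖x (j + 1) - x j‖)]
  -- Step 6: choose the constants
  have hμ₁μ₀ : (0:ℝ) < μ₁ * μ₀ := mul_pos hμ₁ hμ₀
  have hbig : 4 * ((ℓf + ℓφ) ^ 2 + ℓφ ^ 2) < α * (μ₁ * μ₀) := (div_lt_iff₀ hμ₁μ₀).mp hαbig
  obtain ⟨c1, hc1⟩ : ∃ c : ℝ, c = 2 * (ℓf + ℓφ) ^ 2 / (α * μ₀) := ⟨_, rfl⟩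
  obtain ⟨c2, hc2⟩ : ∃ c : ℝ, c = 2 * ℓφ ^ 2 / (α * μ₀) := ⟨_, rfl⟩
  have hc1nn : 0 ≤ c1 := by rw [hc1]; positivity
  have hc2nn : 0 ≤ c2 := by rw [hc2]; positivity
  obtain ⟨δ, hδdef⟩ : ∃ d : ℝ, d = μ₁ / 2 - c1 - c2 := ⟨_, rfl⟩
  have hδ : 0 < δ := by
    have h2 : 2 * (ℓf + ℓφ) ^ 2 / (α * μ₀) + 2 * ℓφ ^ 2 / (α * μ₀) < μ₁ / 2 := by
      rw [← add_div, div_lt_iff₀ (by positivity)]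
      nlinarith [hbig]
    rw [hδdef, hc1, hc2]
    linarith
  refine ⟨2 * c2 + δ / 2, by linarith, min (δ / 4) (μ₂ / 2),
    lt_min (by linarith) (by linarith), ?_⟩
  intro k hk
  obtain ⟨j, rfl⟩ : ∃ j, k = j + 1 := ⟨k - 1, (Nat.succ_pred_eq_of_pos hk).symm⟩
  simp only [Nat.add_sub_cancel]
  -- the main estimate
  have hP : 1 / α * ‖p (j + 1 + 1) - p (j + 1)‖ ^ 2
      ≤ c1 * ‖x (j + 1 + 1) - x (j + 1)‖ ^ 2 + c2 * ‖x (j + 1) - x j‖ ^ 2 := by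
    have h1 : 1 / α * ‖p (j + 1 + 1) - p (j + 1)‖ ^ 2
        = μ₀ * ‖p (j + 1 + 1) - p (j + 1)‖ ^ 2 / (α * μ₀) := by
      field_simp
    have h2 : μ₀ * ‖p (j + 1 + 1) - p (j + 1)‖ ^ 2 / (α * μ₀)
        ≤ (2 * (ℓf + ℓφ) ^ 2 * ‖x (j + 1 + 1) - x (j + 1)‖ ^ 2
            + 2 * ℓφ ^ 2 * ‖x (j + 1) - x j‖ ^ 2) / (α * μ₀) := by
      gcongr
      exact hIV j
    have h3 : (2 * (ℓf + ℓφ) ^ 2 * ‖x (j + 1 + 1) - x (j + 1)‖ ^ 2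
          + 2 * ℓφ ^ 2 * ‖x (j + 1) - x j‖ ^ 2) / (α * μ₀)
        = c1 * ‖x (j + 1 + 1) - x (j + 1)‖ ^ 2 + c2 * ‖x (j + 1) - x j‖ ^ 2 := by
      rw [hc1, hc2]; ring
    linarith
  have hm1 : min (δ / 4) (μ₂ / 2) ≤ δ / 4 := min_le_left _ _
  have hm2 : min (δ / 4) (μ₂ / 2) ≤ μ₂ / 2 := min_le_right _ _
  have hma := mul_le_mul_of_nonneg_right hm1 (sq_nonneg ‖x (j + 1 + 1) - x (j + 1)‖)
  have hmc := mul_le_mul_of_nonneg_right hm2 (sq_nonneg ‖y (j + 1 + 1) - y (j + 1)‖)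
  nlinarith [hI (j + 1), hII (j + 1), hIII (j + 1), hP, hma, hmc,
    mul_nonneg hδ.le (sq_nonneg ‖x (j + 1 + 1) - x (j + 1)‖),
    mul_nonneg hδ.le (sq_nonneg ‖x (j + 1) - x j‖),
    mul_nonneg hc2nn (sq_nonneg ‖x (j + 1) - x j‖),
    sq_nonneg ‖x (j + 1 + 1) - x (j + 1)‖, sq_nonneg ‖x (j + 1) - x j‖,
    sq_nonneg ‖y (j + 1 + 1) - y (j + 1)‖, hδdef]

end MainProof
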